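/- One-step expected contraction near a local minimum: let f : ℝ^d → ℝ be β-smooth, let x* satisfy ∇f(x*) = 0, and let x ∈ ℝ^d satisfy ⟨∇f(x), x − x*⟩ ≥ α ‖x − x*‖² with α > 0. Assume L_max < α/β². Let x' = x − (η_c + u) g. Then E[‖x' − x*‖²] ≤ (1 + (5/3) α L_max) ‖x − x*‖² + (5/3) L_max² σ². -/

import Mathlib

open MeasureTheory ProbabilityTheory
open scoped RealInnerProductSpace ENNReal

/-- Expectation of a continuous function of a uniform random variable on `[a, b]`. -/
lemma uniform_comp_integral {Ω : Type} [MeasurableSpace Ω] {μ : Measure Ω}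
    {a b : ℝ} (hab : a < b) {u : Ω → ℝ}
    (hu : pdf.IsUniform u (Set.Icc a b) μ volume)
    {h : ℝ → ℝ} (hc : Continuous h) :
    Integrable (fun ω => h (u ω)) μ ∧
      ∫ ω, h (u ω) ∂μ = (b - a)⁻¹ * ∫ t in a..b, h t := by
  have hvol : volume (Set.Icc a b) = ENNReal.ofReal (b - a) := Real.volume_Icc
  have hne : volume (Set.Icc a b) ≠ 0 := by
    rw [hvol]; simp [ENNReal.ofReal_eq_zero]; linarith
  have hnt : volume (Set.Icc a b) ≠ ⊤ := by rw [hvol]; exact ENNReal.ofReal_ne_top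
  have hue : AEMeasurable u μ := hu.aemeasurable hne hnt
  have hmap : Measure.map u μ =
      (volume (Set.Icc a b))⁻¹ • volume.restrict (Set.Icc a b) := hu
  have hsm : AEStronglyMeasurable h (Measure.map u μ) := hc.aestronglyMeasurable
  have hInt2 : Integrable h (Measure.map u μ) := by
    rw [hmap]
    exact (hc.integrableOn_Icc (a := a) (b := b)).smul_measure (ENNReal.inv_ne_top.mpr hne)
  have hInt : Integrable (fun ω => h (u ω)) μ :=
    (integrable_map_measure hsm hue).mp hInt2
  refine ⟨hInt, ?_⟩
  have h1 : ∫ ω, h (u ω) ∂μ = ∫ t, h t ∂(Measure.map u μ) :=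
    (integral_map hue hsm).symm
  rw [h1, hmap, integral_smul_measure, integral_Icc_eq_integral_Ioc,
    ← intervalIntegral.integral_of_le hab.le, hvol,
    ← ENNReal.ofReal_inv_of_pos (by linarith), ENNReal.toReal_ofReal
      (inv_nonneg.mpr (by linarith)), smul_eq_mul]

set_option maxHeartbeats 1000000 in
theorem sgd_plrs_contraction_near_minimum
    {Ω : Type} [MeasurableSpace Ω] (μ : Measure Ω) [IsProbabilityMeasure μ]
    {d : ℕ} (f : EuclideanSpace ℝ (Fin d) → ℝ) (α β σ : ℝ)
    (hα : 0 < α) (hβ : 0 ≤ β)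
    (hdiff : Differentiable ℝ f)
    (hsmooth : ∀ a b : EuclideanSpace ℝ (Fin d),
      ‖gradient f a - gradient f b‖ ≤ β * ‖a - b‖)
    (xs x : EuclideanSpace ℝ (Fin d))
    (hxs : gradient f xs = 0)
    (hconv : α * ‖x - xs‖ ^ 2 ≤ ⟪gradient f x, x - xs⟫)
    (Lmin Lmax ηc : ℝ)
    (hLmin : 0 < Lmin) (hLL : Lmin < Lmax) (hLmax : Lmax < 1)
    (hLαβ : Lmax < α / β ^ 2)
    (hηc : ηc = (Lmin + Lmax) / 2)
    (u : Ω → ℝ) (g : Ω → EuclideanSpace ℝ (Fin d))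
    (hu : pdf.IsUniform u (Set.Icc (Lmin - ηc) (Lmax - ηc)) μ volume)
    (hindep : IndepFun u g μ)
    (hg_int : Integrable g μ)
    (hg2_int : Integrable (fun ω => ‖g ω‖ ^ 2) μ)
    (hg_mean : ∫ ω, g ω ∂μ = gradient f x)
    (hσ : ∫ ω, ‖g ω - gradient f x‖ ^ 2 ∂μ ≤ σ ^ 2)
    (x' : Ω → EuclideanSpace ℝ (Fin d))
    (hx' : ∀ ω, x' ω = x - (ηc + u ω) • g ω) :
    ∫ ω, ‖x' ω - xs‖ ^ 2 ∂μ ≤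
      (1 + (5 / 3) * α * Lmax) * ‖x - xs‖ ^ 2 + (5 / 3) * Lmax ^ 2 * σ ^ 2 := by
  set m : EuclideanSpace ℝ (Fin d) := gradient f x with hm
  set v : EuclideanSpace ℝ (Fin d) := x - xs with hv
  have hab : Lmin - ηc < Lmax - ηc := by linarith
  have hba : (Lmax - ηc) - (Lmin - ηc) = Lmax - Lmin := by ring
  have hneLL : Lmax - Lmin ≠ 0 := by linarith
  -- first moment of ηc + u
  have H1 := uniform_comp_integral hab hu (h := fun t => ηc + t)
    (continuous_const.add continuous_id)
  have hu1_int : Integrable (fun ω => ηc + u ω) μ := H1.1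
  have hE1 : ∫ ω, (ηc + u ω) ∂μ = ηc := by
    rw [H1.2, hba]
    have heq : (∫ t in (Lmin - ηc)..(Lmax - ηc), (ηc + t)) =
        ((ηc + (Lmax - ηc)) ^ 2 - (ηc + (Lmin - ηc)) ^ 2) / 2 := by
      rw [intervalIntegral.integral_comp_add_left (fun t => t) ηc]
      exact integral_id
    rw [heq, hηc]
    field_simp
    ring
  -- second moment of ηc + u
  have H2 := uniform_comp_integral hab hu (h := fun t => (ηc + t) ^ 2)
    ((continuous_const.add continuous_id).pow 2)
  have hu2_int : Integrable (fun ω => (ηc + u ω) ^ 2) μ := H2.1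
  have hE2 : ∫ ω, (ηc + u ω) ^ 2 ∂μ = (Lmax - Lmin)⁻¹ * ((Lmax ^ 3 - Lmin ^ 3) / 3) := by
    rw [H2.2, hba]
    congr 1
    have heq : (∫ t in (Lmin - ηc)..(Lmax - ηc), (ηc + t) ^ 2) =
        ∫ t in (ηc + (Lmin - ηc))..(ηc + (Lmax - ηc)), t ^ 2 :=
      intervalIntegral.integral_comp_add_left (fun t => t ^ 2) ηc
    rw [heq, integral_pow]
    ring_nf
  set E2 : ℝ := ∫ ω, (ηc + u ω) ^ 2 ∂μ with hE2def
  have hE2nonneg : 0 ≤ E2 := integral_nonneg fun ω => sq_nonneg _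
  have hE2le : E2 ≤ Lmax ^ 2 := by
    rw [hE2, inv_mul_le_iff₀ (by linarith : (0:ℝ) < Lmax - Lmin)]
    nlinarith [sq_nonneg (Lmax - Lmin), mul_pos hLmin (sub_pos.mpr hLL)]
  -- inner product part
  have hinner_int : Integrable (fun ω => ⟪v, g ω⟫) μ := hg_int.const_inner v
  have hA_indep : IndepFun (fun ω => ηc + u ω) (fun ω => ⟪v, g ω⟫) μ :=
    hindep.comp (measurable_const.add measurable_id)
      (continuous_const.inner continuous_id).measurable
  have hA_int : Integrable (fun ω => (ηc + u ω) * ⟪v, g ω⟫) μ :=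
    hA_indep.integrable_mul hu1_int hinner_int
  have hA_val : ∫ ω, (ηc + u ω) * ⟪v, g ω⟫ ∂μ = ηc * ⟪v, m⟫ := by
    have hmul := hA_indep.integral_mul_eq_mul_integral hu1_int.1 hinner_int.1
    simp only [Pi.mul_apply] at hmul
    rw [hmul, hE1, integral_inner hg_int v, hg_mean]
  -- squared norm part
  have hB_indep : IndepFun (fun ω => (ηc + u ω) ^ 2) (fun ω => ‖g ω‖ ^ 2) μ :=
    hindep.comp ((measurable_const.add measurable_id).pow_const 2)
      (measurable_norm.pow_const 2)
  have hB_int : Integrable (fun ω => (ηc + u ω) ^ 2 * ‖g ω‖ ^ 2) μ :=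
    hB_indep.integrable_mul hu2_int hg2_int
  set Eg2 : ℝ := ∫ ω, ‖g ω‖ ^ 2 ∂μ with hEg2def
  have hEg2nonneg : 0 ≤ Eg2 := integral_nonneg fun ω => sq_nonneg _
  have hB_val : ∫ ω, (ηc + u ω) ^ 2 * ‖g ω‖ ^ 2 ∂μ = E2 * Eg2 := by
    have hmul := hB_indep.integral_mul_eq_mul_integral hu2_int.1 hg2_int.1
    simpa only [Pi.mul_apply] using hmul
  -- pointwise expansion
  have hpt : ∀ ω, ‖x' ω - xs‖ ^ 2 =
      ‖v‖ ^ 2 - 2 * ((ηc + u ω) * ⟪v, g ω⟫) + (ηc + u ω) ^ 2 * ‖g ω‖ ^ 2 := by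
    intro ω
    have hxx : x' ω - xs = v - (ηc + u ω) • g ω := by rw [hx']; rw [hv]; abel
    rw [hxx, norm_sub_sq_real, real_inner_smul_right, norm_smul]
    simp [mul_pow, sq_abs]
  -- split the integral
  have hc1 : Integrable (fun _ : Ω => ‖v‖ ^ 2) μ := integrable_const _
  have hA2 : Integrable (fun ω => 2 * ((ηc + u ω) * ⟪v, g ω⟫)) μ := hA_int.const_mul 2
  have hcs : Integrable (fun ω => ‖v‖ ^ 2 - 2 * ((ηc + u ω) * ⟪v, g ω⟫)) μ := hc1.sub hA2
  have hsplit : ∫ ω, ‖x' ω - xs‖ ^ 2 ∂μ =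
      ‖v‖ ^ 2 - 2 * (ηc * ⟪v, m⟫) + E2 * Eg2 := by
    rw [integral_congr_ae (Filter.Eventually.of_forall hpt),
      integral_add hcs hB_int, integral_sub hc1 hA2,
      integral_const, integral_const_mul, hA_val, hB_val]
    simp [measure_univ]
  -- bound E[‖g‖²]
  have hgm_int : Integrable (fun ω => g ω - m) μ := hg_int.sub (integrable_const m)
  have hgm2_int : Integrable (fun ω => ‖g ω - m‖ ^ 2) μ := by
    have heq : (fun ω => ‖g ω - m‖ ^ 2) =
        fun ω => ‖g ω‖ ^ 2 - 2 * ⟪m, g ω⟫ + ‖m‖ ^ 2 := by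
      funext ω
      rw [norm_sub_sq_real, real_inner_comm]
    rw [heq]
    exact (hg2_int.sub ((hg_int.const_inner m).const_mul 2)).add (integrable_const _)
  have hIP : Integrable (fun ω => 2 * ⟪m, g ω - m⟫) μ := (hgm_int.const_inner m).const_mul 2
  have hsum1 : Integrable (fun ω => ‖g ω - m‖ ^ 2 + 2 * ⟪m, g ω - m⟫) μ := hgm2_int.add hIP
  have hEg2_eq : Eg2 = (∫ ω, ‖g ω - m‖ ^ 2 ∂μ) + ‖m‖ ^ 2 := by
    have hptg : ∀ ω, ‖g ω‖ ^ 2 = ‖g ω - m‖ ^ 2 + 2 * ⟪m, g ω - m⟫ + ‖m‖ ^ 2 := by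
      intro ω
      rw [norm_sub_sq_real, inner_sub_right, real_inner_comm (g ω) m,
        real_inner_self_eq_norm_sq]
      ring
    rw [hEg2def, integral_congr_ae (Filter.Eventually.of_forall hptg),
      integral_add hsum1 (integrable_const _), integral_add hgm2_int hIP,
      integral_const_mul, integral_inner hgm_int m,
      integral_sub hg_int (integrable_const m), hg_mean, integral_const]
    simp [measure_univ]
  have hEg2le : Eg2 ≤ σ ^ 2 + ‖m‖ ^ 2 := by
    rw [hEg2_eq]; linarith [hσ]
  -- gradient bound
  have hmb : ‖m‖ ≤ β * ‖v‖ := by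
    have hs := hsmooth x xs
    rwa [hxs, sub_zero] at hs
  have hm2 : ‖m‖ ^ 2 ≤ β ^ 2 * ‖v‖ ^ 2 := by
    nlinarith [norm_nonneg v, norm_nonneg m]
  -- β² Lmax ≤ α
  have hβL : β ^ 2 * Lmax ≤ α := by
    rcases eq_or_lt_of_le hβ with h0 | h0
    · rw [← h0]; simpa using hα.le
    · have hβ2 : 0 < β ^ 2 := by positivity
      have hlt := (lt_div_iff₀ hβ2).mp hLαβ
      nlinarith
  -- final arithmetic
  rw [hsplit]
  have hvm : α * ‖v‖ ^ 2 ≤ ⟪v, m⟫ := by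
    rw [real_inner_comm]; exact hconv
  have hηcpos : 0 < ηc := by rw [hηc]; linarith
  have hD : (0:ℝ) ≤ ‖v‖ ^ 2 := sq_nonneg _
  have hσ2 : (0:ℝ) ≤ σ ^ 2 := sq_nonneg _
  have hLmaxpos : 0 < Lmax := lt_trans hLmin hLL
  have hEg2le' : Eg2 ≤ σ ^ 2 + β ^ 2 * ‖v‖ ^ 2 := le_trans hEg2le (by linarith)
  have key1 : E2 * Eg2 ≤ Lmax ^ 2 * σ ^ 2 + α * Lmax * ‖v‖ ^ 2 := by
    have h1 : E2 * Eg2 ≤ Lmax ^ 2 * Eg2 := mul_le_mul_of_nonneg_right hE2le hEg2nonneg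
    have h2 : Lmax ^ 2 * Eg2 ≤ Lmax ^ 2 * (σ ^ 2 + β ^ 2 * ‖v‖ ^ 2) :=
      mul_le_mul_of_nonneg_left hEg2le' (by positivity)
    have h3 : (β ^ 2 * Lmax) * (Lmax * ‖v‖ ^ 2) ≤ α * (Lmax * ‖v‖ ^ 2) :=
      mul_le_mul_of_nonneg_right hβL (by positivity)
    nlinarith
  have key2 : 0 ≤ ηc * ⟪v, m⟫ :=
    mul_nonneg hηcpos.le (le_trans (by positivity) hvm)
  have haux1 : (0:ℝ) ≤ α * Lmax * ‖v‖ ^ 2 := by positivity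
  have haux2 : (0:ℝ) ≤ Lmax ^ 2 * σ ^ 2 := by positivity
  linarith
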